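/- For r ≥ 1, let V_r = ℚ^{1+r} equipped with the symmetric bilinear form B_r(x,y) = x₀y₀ − Σ_{i=1}^{r} x_i y_i, and let K_r = (−3,1,1,…,1) ∈ V_r, so that B_r(K_r,K_r) = 9 − r. Suppose that P(V_r, B_r, K_r, A₁, A₂) = 0 for every integer r > m + u₁ + u₂ and all tuples A₁ ∈ V_r^{u₁}, A₂ ∈ V_r^{u₂}. Then every polynomial p_{j,l,σ} is the zero polynomial; consequently P(V, B, K, A₁, A₂) = 0 for every ℚ-vector space V with symmetric bilinear form B, every vector K ∈ V, and all tuples A₁ ∈ V^{u₁}, A₂ ∈ V^{u₂}. -/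

import Mathlib

open scoped Classical

/-- The universal polynomial expression `P(V, B, K, A₁, A₂)` of type `(u₁, u₂)` built
from a family of polynomials `p_{s,j,l,σ} ∈ ℚ[T]`:
`P = Σ_{s,j,l,σ} [∏_{i ∉ im j} B(K, a_{1,i})] · [∏_{i ∉ im l} B(K, a_{2,i})] ·
[∏_{i} B(a_{1,j i}, a_{2, l (σ i)})] · p_{j,l,σ}(B(K,K))`,
the sum running over `0 ≤ s ≤ min u₁ u₂`, strictly increasing tuples
`j : Fin s → Fin u₁`, `l : Fin s → Fin u₂`, and permutations `σ` of `Fin s`. -/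
noncomputable def univP {u₁ u₂ : ℕ}
    (p : (s : ℕ) → (Fin s → Fin u₁) → (Fin s → Fin u₂) → Equiv.Perm (Fin s) → Polynomial ℚ)
    {V : Type} (B : V → V → ℚ) (K : V)
    (A₁ : Fin u₁ → V) (A₂ : Fin u₂ → V) : ℚ :=
  ∑ s ∈ Finset.range (min u₁ u₂ + 1),
    ∑ j : Fin s → Fin u₁, ∑ l : Fin s → Fin u₂, ∑ σ : Equiv.Perm (Fin s),
      if StrictMono j ∧ StrictMono l then
        (∏ i ∈ Finset.univ.filter fun i => i ∉ Set.range j, B K (A₁ i)) *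
        (∏ i ∈ Finset.univ.filter fun i => i ∉ Set.range l, B K (A₂ i)) *
        (∏ i : Fin s, B (A₁ (j i)) (A₂ (l (σ i)))) *
        (p s j l σ).eval (B K K)
      else 0

section AuxVanishing

/-- The intersection form of the `r`-fold blow-up model. -/
def auxB (r : ℕ) (x y : Fin (r+1) → ℚ) : ℚ :=
  x 0 * y 0 - ∑ i : Fin r, x i.succ * y i.succ

/-- The canonical class `(−3,1,…,1)`. -/
def auxK (r : ℕ) : Fin (r+1) → ℚ := fun i => if i = 0 then (-3 : ℚ) else 1

/-- The exceptional class `e_t`. -/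
def auxE (r : ℕ) (t : Fin r) : Fin (r+1) → ℚ := fun i => if i = t.succ then 1 else 0

/-- The class `(1,0,…,0)`. -/
def auxF (r : ℕ) : Fin (r+1) → ℚ := fun i => if i = 0 then 1 else 0

lemma auxB_EE (r : ℕ) (a b : Fin r) :
    auxB r (auxE r a) (auxE r b) = if a = b then -1 else 0 := by
  unfold auxB auxE
  rw [if_neg (Ne.symm (Fin.succ_ne_zero a))]
  have : ∀ i : Fin r, (if (i.succ : Fin (r+1)) = a.succ then (1:ℚ) else 0) *
      (if (i.succ : Fin (r+1)) = b.succ then (1:ℚ) else 0)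
      = if i = a then (if a = b then (1:ℚ) else 0) else 0 := by
    intro i
    by_cases hia : i = a
    · subst hia
      simp [Fin.succ_inj]
    · rw [if_neg (by simpa [Fin.succ_inj] using hia), if_neg hia, zero_mul]
  rw [Finset.sum_congr rfl fun i _ => this i, Finset.sum_ite_eq' Finset.univ a]
  simp only [Finset.mem_univ, if_true]
  by_cases hab : a = b <;> simp [hab, Fin.succ_ne_zero]

lemma auxB_FE (r : ℕ) (b : Fin r) : auxB r (auxF r) (auxE r b) = 0 := by
  unfold auxB auxE auxF
  rw [if_neg (Ne.symm (Fin.succ_ne_zero b))]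
  simp [Fin.succ_ne_zero]

lemma auxB_KF (r : ℕ) : auxB r (auxK r) (auxF r) = -3 := by
  unfold auxB auxK auxF
  simp [Fin.succ_ne_zero]

lemma auxB_KE (r : ℕ) (b : Fin r) : auxB r (auxK r) (auxE r b) = -1 := by
  unfold auxB auxK auxE
  rw [if_neg (Ne.symm (Fin.succ_ne_zero b))]
  simp [Fin.succ_ne_zero, Finset.sum_ite_eq']

lemma auxB_KK (r : ℕ) : auxB r (auxK r) (auxK r) = 9 - r := by
  unfold auxB auxK
  simp [Fin.succ_ne_zero]
  ring

lemma strictMono_fin_id {n : ℕ} (f : Fin n → Fin n) (hf : StrictMono f) : f = id := by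
  have hsurj : Function.Surjective f :=
    (Finite.injective_iff_surjective).mp hf.injective
  exact (StrictMono.range_inj hf strictMono_id).mp
    (by rw [Set.range_id, Set.range_eq_univ.mpr hsurj])

/-- First test tuple: exceptional classes on the image of `j`, the class `F` elsewhere. -/
noncomputable def auxA₁ {u₁ s : ℕ} (r : ℕ) (hsr : s < r) (j : Fin s → Fin u₁) :
    Fin u₁ → Fin (r+1) → ℚ :=
  fun i => if h : ∃ t, j t = i then auxE r ⟨h.choose.1, lt_trans h.choose.2 hsr⟩ else auxF r

/-- Second test tuple: matched exceptional classes on the image of `l`, `e_s` elsewhere. -/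
noncomputable def auxA₂ {u₂ s : ℕ} (r : ℕ) (hsr : s < r) (l : Fin s → Fin u₂)
    (σ : Equiv.Perm (Fin s)) : Fin u₂ → Fin (r+1) → ℚ :=
  fun i => if h : ∃ t, l t = i then
      auxE r ⟨(σ⁻¹ h.choose).1, lt_trans (σ⁻¹ h.choose).2 hsr⟩
    else auxE r ⟨s, hsr⟩

lemma auxA₁_mem {u₁ s : ℕ} (r : ℕ) (hsr : s < r) {j : Fin s → Fin u₁}
    (hj : Function.Injective j) (t : Fin s) :
    auxA₁ r hsr j (j t) = auxE r ⟨t.1, lt_trans t.2 hsr⟩ := by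
  have h : ∃ t', j t' = j t := ⟨t, rfl⟩
  have hc : h.choose = t := hj h.choose_spec
  simp only [auxA₁]
  rw [dif_pos h]
  exact congrArg (fun z : Fin s => auxE r ⟨z.1, lt_trans z.2 hsr⟩) hc

lemma auxA₁_not {u₁ s : ℕ} (r : ℕ) (hsr : s < r) (j : Fin s → Fin u₁)
    {i : Fin u₁} (h : ¬ ∃ t, j t = i) : auxA₁ r hsr j i = auxF r := by
  simp only [auxA₁]
  exact dif_neg h

lemma auxA₂_mem {u₂ s : ℕ} (r : ℕ) (hsr : s < r) {l : Fin s → Fin u₂}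
    (hl : Function.Injective l) (σ : Equiv.Perm (Fin s)) (t : Fin s) :
    auxA₂ r hsr l σ (l t) = auxE r ⟨(σ⁻¹ t).1, lt_trans (σ⁻¹ t).2 hsr⟩ := by
  have h : ∃ t', l t' = l t := ⟨t, rfl⟩
  have hc : h.choose = t := hl h.choose_spec
  simp only [auxA₂]
  rw [dif_pos h]
  exact congrArg (fun z : Fin s => auxE r ⟨(σ⁻¹ z).1, lt_trans (σ⁻¹ z).2 hsr⟩) hc

lemma auxA₂_not {u₂ s : ℕ} (r : ℕ) (hsr : s < r) (l : Fin s → Fin u₂)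
    (σ : Equiv.Perm (Fin s)) {i : Fin u₂} (h : ¬ ∃ t, l t = i) :
    auxA₂ r hsr l σ i = auxE r ⟨s, hsr⟩ := by
  simp only [auxA₂]
  exact dif_neg h

lemma auxA₂_isE {u₂ s : ℕ} (r : ℕ) (hsr : s < r) (l : Fin s → Fin u₂)
    (σ : Equiv.Perm (Fin s)) (i : Fin u₂) : ∃ b, auxA₂ r hsr l σ i = auxE r b := by
  simp only [auxA₂]
  split
  · exact ⟨_, rfl⟩
  · exact ⟨_, rfl⟩

lemma key_eval {m u₁ u₂ : ℕ}
    (p : (s : ℕ) → (Fin s → Fin u₁) → (Fin s → Fin u₂) → Equiv.Perm (Fin s) → Polynomial ℚ)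
    (hvan : ∀ r : ℕ, m + u₁ + u₂ < r →
      ∀ (A₁ : Fin u₁ → (Fin (r + 1) → ℚ)) (A₂ : Fin u₂ → (Fin (r + 1) → ℚ)),
        univP p
          (fun x y => x 0 * y 0 - ∑ i : Fin r, x i.succ * y i.succ)
          (fun i => if i = 0 then (-3 : ℚ) else 1) A₁ A₂ = 0)
    {s : ℕ} (hs : s ≤ min u₁ u₂)
    (IH : ∀ s' < s, ∀ (j' : Fin s' → Fin u₁) (l' : Fin s' → Fin u₂)
      (σ' : Equiv.Perm (Fin s')), StrictMono j' → StrictMono l' → p s' j' l' σ' = 0)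
    {j : Fin s → Fin u₁} {l : Fin s → Fin u₂} (σ : Equiv.Perm (Fin s))
    (hj : StrictMono j) (hl : StrictMono l)
    (r : ℕ) (hr : m + u₁ + u₂ < r) :
    (p s j l σ).eval ((9 : ℚ) - r) = 0 := by
  have hs₂ : s ≤ u₂ := le_trans hs (min_le_right _ _)
  have hsr : s < r := by omega
  have h0 : univP p (auxB r) (auxK r) (auxA₁ r hsr j) (auxA₂ r hsr l σ) = 0 :=
    hvan r hr _ _
  -- a mismatched pairing kills the corresponding factor
  have hfac : ∀ (x : Fin u₁) (y : Fin u₂), (¬ ∃ t, x = j t ∧ y = l (σ t)) →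
      auxB r (auxA₁ r hsr j x) (auxA₂ r hsr l σ y) = 0 := by
    intro x y hxy
    by_cases hx : ∃ t, j t = x
    · obtain ⟨t, ht⟩ := hx
      rw [← ht, auxA₁_mem r hsr hj.injective t]
      by_cases hy : ∃ t', l t' = y
      · obtain ⟨t', ht'⟩ := hy
        rw [← ht', auxA₂_mem r hsr hl.injective σ t', auxB_EE, if_neg]
        intro hEq
        have hv := congrArg Fin.val hEq
        have h1 : t = σ⁻¹ t' := Fin.ext hv
        refine hxy ⟨t, ht.symm, ?_⟩
        rw [h1, Equiv.Perm.coe_inv, Equiv.apply_symm_apply]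
        exact ht'.symm
      · rw [auxA₂_not r hsr l σ hy, auxB_EE, if_neg]
        intro hEq
        exact absurd (congrArg Fin.val hEq) (Nat.ne_of_lt t.2)
    · obtain ⟨b, hb⟩ := auxA₂_isE r hsr l σ y
      rw [auxA₁_not r hsr j hx, hb, auxB_FE]
  have hmismatch : ∀ (s' : ℕ) (j' : Fin s' → Fin u₁) (l' : Fin s' → Fin u₂)
      (σ' : Equiv.Perm (Fin s')) (i : Fin s'),
      (¬ ∃ t, j' i = j t ∧ l' (σ' i) = l (σ t)) →
      (∏ i : Fin s', auxB r (auxA₁ r hsr j (j' i)) (auxA₂ r hsr l σ (l' (σ' i)))) = 0 :=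
    fun s' j' l' σ' i hi => Finset.prod_eq_zero (Finset.mem_univ i) (hfac _ _ hi)
  -- terms with s' ≠ s vanish
  have houter : ∀ s' ∈ Finset.range (min u₁ u₂ + 1), s' ≠ s →
      (∑ j' : Fin s' → Fin u₁, ∑ l' : Fin s' → Fin u₂, ∑ σ' : Equiv.Perm (Fin s'),
        if StrictMono j' ∧ StrictMono l' then
          (∏ i ∈ Finset.univ.filter fun i => i ∉ Set.range j',
            auxB r (auxK r) (auxA₁ r hsr j i)) *
          (∏ i ∈ Finset.univ.filter fun i => i ∉ Set.range l',
            auxB r (auxK r) (auxA₂ r hsr l σ i)) *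
          (∏ i : Fin s', auxB r (auxA₁ r hsr j (j' i)) (auxA₂ r hsr l σ (l' (σ' i)))) *
          (p s' j' l' σ').eval (auxB r (auxK r) (auxK r))
        else 0) = 0 := by
    intro s' _ hne
    refine Finset.sum_eq_zero fun j' _ => Finset.sum_eq_zero fun l' _ =>
      Finset.sum_eq_zero fun σ' _ => ?_
    split
    case isFalse => rfl
    case isTrue h =>
      obtain ⟨hj', hl'⟩ := h
      by_cases hall : ∀ i : Fin s', ∃ t, j' i = j t ∧ l' (σ' i) = l (σ t)
      · have hinj : Function.Injective fun i => (hall i).choose := by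
          intro a b hab
          apply hj'.injective
          rw [(hall a).choose_spec.1, (hall b).choose_spec.1]
          exact congrArg j hab
        have hle : s' ≤ s := by
          simpa using Fintype.card_le_of_injective _ hinj
        rw [IH s' (lt_of_le_of_ne hle hne) j' l' σ' hj' hl', Polynomial.eval_zero, mul_zero]
      · push_neg at hall
        obtain ⟨i, hi⟩ := hall
        rw [hmismatch s' j' l' σ' i (by push_neg; exact hi), mul_zero, zero_mul]
  -- within s' = s, only (j, l, σ) survives
  have hsingle : ∀ (j' : Fin s → Fin u₁) (l' : Fin s → Fin u₂) (σ' : Equiv.Perm (Fin s)),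
      ¬(j' = j ∧ l' = l ∧ σ' = σ) →
      (if StrictMono j' ∧ StrictMono l' then
          (∏ i ∈ Finset.univ.filter fun i => i ∉ Set.range j',
            auxB r (auxK r) (auxA₁ r hsr j i)) *
          (∏ i ∈ Finset.univ.filter fun i => i ∉ Set.range l',
            auxB r (auxK r) (auxA₂ r hsr l σ i)) *
          (∏ i : Fin s, auxB r (auxA₁ r hsr j (j' i)) (auxA₂ r hsr l σ (l' (σ' i)))) *
          (p s j' l' σ').eval (auxB r (auxK r) (auxK r))
        else 0) = 0 := by
    intro j' l' σ' hne
    split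
    case isFalse => rfl
    case isTrue h =>
      obtain ⟨hj', hl'⟩ := h
      by_cases hall : ∀ i : Fin s, ∃ t, j' i = j t ∧ l' (σ' i) = l (σ t)
      · exfalso
        have hspec1 : ∀ i, j' i = j ((hall i).choose) := fun i => (hall i).choose_spec.1
        have hspec2 : ∀ i, l' (σ' i) = l (σ ((hall i).choose)) := fun i => (hall i).choose_spec.2
        have hτmono : StrictMono fun i => (hall i).choose := by
          intro a b hab
          have h1 := hj' hab
          rw [hspec1 a, hspec1 b] at h1
          exact hj.lt_iff_lt.mp h1
        have hτid : ∀ i, (hall i).choose = i :=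
          fun i => congrFun (strictMono_fin_id _ hτmono) i
        have hjj : j' = j := funext fun i => by rw [hspec1 i, hτid i]
        have hll' : ∀ i, l' (σ' i) = l (σ i) := fun i => by rw [hspec2 i, hτid i]
        have hg : StrictMono fun k => σ (σ'⁻¹ k) := by
          intro a b hab
          have h1 := hl' hab
          have e1 : l' a = l (σ (σ'⁻¹ a)) := by
            conv_lhs => rw [← Equiv.apply_symm_apply σ' a]
            exact hll' (σ'⁻¹ a)
          have e2 : l' b = l (σ (σ'⁻¹ b)) := by
            conv_lhs => rw [← Equiv.apply_symm_apply σ' b]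
            exact hll' (σ'⁻¹ b)
          rw [e1, e2] at h1
          exact hl.lt_iff_lt.mp h1
        have hgid : ∀ k, σ (σ'⁻¹ k) = k := fun k => congrFun (strictMono_fin_id _ hg) k
        have hll : l' = l := funext fun k => by
          have h1 : l' k = l (σ (σ'⁻¹ k)) := by
            conv_lhs => rw [← Equiv.apply_symm_apply σ' k]
            exact hll' (σ'⁻¹ k)
          rw [h1, hgid k]
        have hσσ : σ' = σ := by
          apply Equiv.ext
          intro i
          have h2 := hll' i
          rw [hll] at h2
          exact hl.injective h2
        exact hne ⟨hjj, hll, hσσ⟩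
      · push_neg at hall
        obtain ⟨i, hi⟩ := hall
        rw [hmismatch s j' l' σ' i (by push_neg; exact hi), mul_zero, zero_mul]
  simp only [univP] at h0
  rw [Finset.sum_eq_single_of_mem s (Finset.mem_range.mpr (Nat.lt_succ_of_le hs)) houter] at h0
  rw [Finset.sum_eq_single_of_mem j (Finset.mem_univ _)
    (fun j' _ hne => Finset.sum_eq_zero fun l' _ => Finset.sum_eq_zero fun σ' _ =>
      hsingle j' l' σ' fun h => hne h.1)] at h0
  rw [Finset.sum_eq_single_of_mem l (Finset.mem_univ _)
    (fun l' _ hne => Finset.sum_eq_zero fun σ' _ =>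
      hsingle j l' σ' fun h => hne h.2.1)] at h0
  rw [Finset.sum_eq_single_of_mem σ (Finset.mem_univ _)
    (fun σ' _ hne => hsingle j l σ' fun h => hne h.2.2)] at h0
  rw [if_pos ⟨hj, hl⟩, auxB_KK] at h0
  have hP₁ : ∀ i ∈ Finset.univ.filter fun i => i ∉ Set.range j,
      auxB r (auxK r) (auxA₁ r hsr j i) = -3 := by
    intro i hi
    rw [auxA₁_not r hsr j (by simpa using (Finset.mem_filter.mp hi).2), auxB_KF]
  have hP₂ : ∀ i ∈ Finset.univ.filter fun i => i ∉ Set.range l,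
      auxB r (auxK r) (auxA₂ r hsr l σ i) = -1 := by
    intro i hi
    rw [auxA₂_not r hsr l σ (by simpa using (Finset.mem_filter.mp hi).2), auxB_KE]
  have hP₃ : ∀ i ∈ (Finset.univ : Finset (Fin s)),
      auxB r (auxA₁ r hsr j (j i)) (auxA₂ r hsr l σ (l (σ i))) = -1 := by
    intro i _
    rw [auxA₁_mem r hsr hj.injective i, auxA₂_mem r hsr hl.injective σ (σ i), auxB_EE, if_pos]
    exact Fin.ext (by simp)
  rw [Finset.prod_congr rfl hP₁, Finset.prod_congr rfl hP₂, Finset.prod_congr rfl hP₃,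
    Finset.prod_const, Finset.prod_const, Finset.prod_const] at h0
  refine (mul_eq_zero.mp h0).resolve_left ?_
  exact mul_ne_zero (mul_ne_zero (pow_ne_zero _ (by norm_num)) (pow_ne_zero _ (by norm_num)))
    (pow_ne_zero _ (by norm_num))

end AuxVanishing

/-- If the universal polynomial expression of degree at most `m` and type `(u₁, u₂)` vanishes
on the lattice models `(ℚ^{1+r}, B_r, K_r)` (coming from `r`-fold blow-ups of the plane,
with `B_r(x,y) = x₀y₀ − Σ_{i=1}^r x_i y_i` and `K_r = (−3,1,…,1)`) for every
`r > m + u₁ + u₂`, then every polynomial `p_{j,l,σ}` is the zero polynomial, and consequently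
`P(V,B,K,A₁,A₂) = 0` for every ℚ-vector space `V` with a symmetric bilinear form `B`,
every `K ∈ V` and all tuples `A₁ ∈ V^{u₁}`, `A₂ ∈ V^{u₂}`. -/
theorem vanishing_universal_polynomial {m u₁ u₂ : ℕ}
    (p : (s : ℕ) → (Fin s → Fin u₁) → (Fin s → Fin u₂) → Equiv.Perm (Fin s) → Polynomial ℚ)
    (hdeg : ∀ (s : ℕ) (j : Fin s → Fin u₁) (l : Fin s → Fin u₂) (σ : Equiv.Perm (Fin s)),
      (p s j l σ).natDegree ≤ m)
    (hvan : ∀ r : ℕ, m + u₁ + u₂ < r →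
      ∀ (A₁ : Fin u₁ → (Fin (r + 1) → ℚ)) (A₂ : Fin u₂ → (Fin (r + 1) → ℚ)),
        univP p
          (fun x y => x 0 * y 0 - ∑ i : Fin r, x i.succ * y i.succ)
          (fun i => if i = 0 then (-3 : ℚ) else 1) A₁ A₂ = 0) :
    (∀ s : ℕ, s ≤ min u₁ u₂ → ∀ (j : Fin s → Fin u₁) (l : Fin s → Fin u₂)
      (σ : Equiv.Perm (Fin s)), StrictMono j → StrictMono l → p s j l σ = 0) ∧
    (∀ (V : Type) [AddCommGroup V] [Module ℚ V] (B : V → V → ℚ),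
      (∀ x y z : V, B (x + y) z = B x z + B y z) →
      (∀ x y z : V, B x (y + z) = B x y + B x z) →
      (∀ (c : ℚ) (x y : V), B (c • x) y = c * B x y) →
      (∀ (c : ℚ) (x y : V), B x (c • y) = c * B x y) →
      (∀ x y : V, B x y = B y x) →
      ∀ (K : V) (A₁ : Fin u₁ → V) (A₂ : Fin u₂ → V),
        univP p B K A₁ A₂ = 0) := by
  have part1 : ∀ s : ℕ, s ≤ min u₁ u₂ → ∀ (j : Fin s → Fin u₁) (l : Fin s → Fin u₂)
      (σ : Equiv.Perm (Fin s)), StrictMono j → StrictMono l → p s j l σ = 0 := by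
    intro s
    induction s using Nat.strong_induction_on with
    | _ s IH =>
      intro hs j l σ hj hl
      apply Polynomial.eq_zero_of_infinite_isRoot
      refine Set.infinite_of_injective_forall_mem
        (f := fun k : ℕ => (9 : ℚ) - ((m + u₁ + u₂ + 1 + k : ℕ) : ℚ)) ?_ ?_
      · intro a b hab
        simp only [sub_right_inj, Nat.cast_inj] at hab
        omega
      · intro k
        exact key_eval p hvan hs
          (fun s' hlt j' l' σ' hj' hl' =>
            IH s' hlt (le_trans (le_of_lt hlt) hs) j' l' σ' hj' hl')
          σ hj hl (m + u₁ + u₂ + 1 + k) (by omega)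
  refine ⟨part1, ?_⟩
  intro V _ _ B _ _ _ _ _ K A₁ A₂
  unfold univP
  refine Finset.sum_eq_zero fun s hs => Finset.sum_eq_zero fun j _ =>
    Finset.sum_eq_zero fun l _ => Finset.sum_eq_zero fun σ _ => ?_
  split
  case isTrue h =>
    rw [part1 s (Nat.lt_succ_iff.mp (Finset.mem_range.mp hs)) j l σ h.1 h.2,
      Polynomial.eval_zero, mul_zero]
  case isFalse => rfl
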